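/- The function H_l is strictly convex on the interval [1, Ψ(f₀)]. -/

import Mathlib

open Real Set Filter

/-- H_l is strictly convex on [1, Ψ(f₀)]. -/
theorem stmt_1 (α δ lam : ℝ) (hα : 0 < α) (hδ : 0 < δ) (hlam : 0 < lam)
    (hltd : lam < α * δ)
    (f₀ : ℝ)
    (hf₀ : f₀ = (1 / Real.sqrt (2 * α)) * (Real.sqrt ((α * δ + lam) / (α * δ - lam)) - 1))
    (Ψ : ℝ → ℝ) (hΨ : ∀ x, Ψ x = Real.exp (2 * Real.sqrt (2 * α) * x))
    (Hl : ℝ → ℝ)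
    (hHl : ∀ y, 0 < y → Hl y = Real.sqrt y *
      (-(lam / α ^ 2) + ((δ - lam / α) / (8 * α)) * (Real.log y) ^ 2))
    (hHl0 : Hl 0 = 0) :
    StrictConvexOn ℝ (Set.Icc 1 (Ψ f₀)) Hl := by
  set A : ℝ := lam / α ^ 2 with hA
  set c : ℝ := (δ - lam / α) / (8 * α) with hc
  have hαδ : 0 < α * δ - lam := by linarith
  have hc0 : 0 < c := by
    apply div_pos
    · rw [sub_pos, div_lt_iff₀ hα]; nlinarith
    · positivity
  have hA0 : 0 < A := by positivity
  set r : ℝ := (α * δ + lam) / (α * δ - lam) with hr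
  have hr1 : 1 < r := by
    rw [hr, lt_div_iff₀ hαδ]; linarith
  set s : ℝ := Real.sqrt r with hs
  have hs1 : 1 < s := by
    have h := Real.sqrt_lt_sqrt (by norm_num) hr1
    simpa using h
  have hss : s * s = r := Real.mul_self_sqrt (by linarith)
  have h2α : 0 < Real.sqrt (2 * α) := Real.sqrt_pos.mpr (by linarith)
  have hf₀pos : 0 < f₀ := by
    rw [hf₀]
    exact mul_pos (by positivity) (by linarith)
  have hK1 : 1 < Ψ f₀ := by
    rw [hΨ]
    calc (1:ℝ) = Real.exp 0 := Real.exp_zero.symm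
    _ < _ := Real.exp_lt_exp.mpr (by positivity)
  have hlogK : Real.log (Ψ f₀) = 2 * (s - 1) := by
    rw [hΨ, Real.log_exp, hf₀]
    field_simp
  -- key inequality
  have hid : A + 8 * c = 4 * c * (r + 1) := by
    rw [hA, hc, hr]
    field_simp
    ring
  have hkey : c * (Real.log (Ψ f₀)) ^ 2 < A + 8 * c := by
    rw [hlogK, hid]
    nlinarith [mul_pos hc0 (lt_trans one_pos hs1)]
  -- the reference function
  set F : ℝ → ℝ := fun y => Real.sqrt y * (-A + c * Real.log y ^ 2) with hF
  set G : ℝ → ℝ := fun y =>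
    (-A + c * Real.log y ^ 2 + 4 * c * Real.log y) / (2 * Real.sqrt y) with hG
  have hFd : ∀ x : ℝ, 0 < x → HasDerivAt F (G x) x := by
    intro x hx0
    have hxne : x ≠ 0 := hx0.ne'
    have hsx : 0 < Real.sqrt x := Real.sqrt_pos.mpr hx0
    have hsq : Real.sqrt x * Real.sqrt x = x := Real.mul_self_sqrt hx0.le
    have h1 : HasDerivAt Real.sqrt (1 / (2 * Real.sqrt x)) x := Real.hasDerivAt_sqrt hxne
    have hlog : HasDerivAt Real.log x⁻¹ x := Real.hasDerivAt_log hxne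
    have h3 : HasDerivAt (fun y => -A + c * Real.log y ^ 2)
        (c * (2 * Real.log x ^ 1 * x⁻¹)) x := ((hlog.pow 2).const_mul c).const_add (-A)
    have h4 : HasDerivAt (fun y => Real.sqrt y * (-A + c * Real.log y ^ 2)) _ x := h1.mul h3
    convert h4 using 1
    rw [hG]
    have h2 : Real.sqrt x ^ 2 = x := Real.sq_sqrt hx0.le
    have h3' : Real.sqrt x ^ 3 = x * Real.sqrt x := by rw [pow_succ, h2]
    field_simp
    ring_nf
    rw [h2]
  have hGd : ∀ x : ℝ, 0 < x → HasDerivAt G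
      ((A + 8 * c - c * Real.log x ^ 2) / (4 * x * Real.sqrt x)) x := by
    intro x hx0
    have hxne : x ≠ 0 := hx0.ne'
    have hsx : 0 < Real.sqrt x := Real.sqrt_pos.mpr hx0
    have hsq : Real.sqrt x * Real.sqrt x = x := Real.mul_self_sqrt hx0.le
    have hlog : HasDerivAt Real.log x⁻¹ x := Real.hasDerivAt_log hxne
    have hN : HasDerivAt (fun y => -A + c * Real.log y ^ 2 + 4 * c * Real.log y)
        (c * (2 * Real.log x ^ 1 * x⁻¹) + 4 * c * x⁻¹) x :=
      (((hlog.pow 2).const_mul c).const_add (-A)).add (hlog.const_mul (4 * c))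
    have hD : HasDerivAt (fun y => 2 * Real.sqrt y) (2 * (1 / (2 * Real.sqrt x))) x :=
      (Real.hasDerivAt_sqrt hxne).const_mul 2
    have h : HasDerivAt (fun y => (-A + c * Real.log y ^ 2 + 4 * c * Real.log y) / (2 * Real.sqrt y)) _ x :=
      hN.div hD (by positivity)
    convert h using 1
    have h2 : Real.sqrt x ^ 2 = x := Real.sq_sqrt hx0.le
    have h3 : Real.sqrt x ^ 3 = x * Real.sqrt x := by rw [pow_succ, h2]
    field_simp
    ring_nf
    rw [h2]
    ring_nf
  have hFconv : StrictConvexOn ℝ (Set.Icc 1 (Ψ f₀)) F := by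
    apply strictConvexOn_of_deriv2_pos (convex_Icc _ _)
    · intro x hx
      have hx0 : (0:ℝ) < x := lt_of_lt_of_le one_pos hx.1
      exact (hFd x hx0).continuousAt.continuousWithinAt
    · intro x hx
      rw [interior_Icc] at hx
      have hx0 : (0:ℝ) < x := lt_trans one_pos hx.1
      have hev : deriv F =ᶠ[nhds x] G :=
        Filter.eventuallyEq_of_mem (Ioi_mem_nhds hx0) (fun y hy => (hFd y hy).deriv)
      have h2 : deriv^[2] F x = (A + 8 * c - c * Real.log x ^ 2) / (4 * x * Real.sqrt x) := by
        show deriv (deriv F) x = _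
        rw [hev.deriv_eq, (hGd x hx0).deriv]
      rw [h2]
      apply div_pos
      · have hl0 : 0 ≤ Real.log x := Real.log_nonneg hx.1.le
        have hlt : Real.log x < Real.log (Ψ f₀) := Real.log_lt_log hx0 hx.2
        have : c * Real.log x ^ 2 ≤ c * Real.log (Ψ f₀) ^ 2 := by
          apply mul_le_mul_of_nonneg_left _ hc0.le
          exact pow_le_pow_left₀ hl0 hlt.le 2
        linarith
      · positivity
  -- transfer to Hl
  have heq : ∀ y ∈ Set.Icc (1:ℝ) (Ψ f₀), Hl y = F y := by
    intro y hy
    have hy0 : (0:ℝ) < y := lt_of_lt_of_le one_pos hy.1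
    rw [hHl y hy0]
  refine ⟨convex_Icc _ _, ?_⟩
  intro x hx y hy hxy a b ha hb hab
  have hm : a • x + b • y ∈ Set.Icc (1:ℝ) (Ψ f₀) :=
    (convex_Icc (1:ℝ) (Ψ f₀)) hx hy ha.le hb.le hab
  rw [heq _ hm, heq _ hx, heq _ hy]
  exact hFconv.2 hx hy hxy ha hb hab
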